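/- Let F be a field, R = F[X,Y,Z], n ≥ 2 an integer, and let I be the ideal generated by the monomials X^iY^{2n-i}Z for 0 ≤ i ≤ 2n with i ≠ n, together with X^nY^{n+1} and X^{n+1}Y^n. Then ~I : (X^nY^n) = (X,Y,Z): explicitly, X^nY^n ∉ ~I, (X,Y)·X^nY^n ⊆ I, and X^nY^nZ ∈ I^2 : I ⊆ ~I. Consequently the maximal ideal (X,Y,Z) is an associated prime of R/~I, although it is not an associated prime of R/I (the associated primes of I are (X,Y), (X,Z), (Y,Z)). -/

import Mathlib

/-- The Ratliff-Rush closure of the power `I^n`:  `⋃_{k≥0} (I^{n+k} : I^k)`. -/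
noncomputable def rrPow {R : Type*} [CommRing R] (I : Ideal R) (n : ℕ) : Ideal R :=
  ⨆ k : ℕ, (I ^ (n + k)).colon (I ^ k : Ideal R)

namespace Stmt17Aux

open MvPolynomial

noncomputable def v3 (a b c : ℕ) : Fin 3 →₀ ℕ :=
  Finsupp.single 0 a + Finsupp.single 1 b + Finsupp.single 2 c

@[simp] lemma v3_apply0 (a b c : ℕ) : v3 a b c 0 = a := by
  simp [v3, Finsupp.single_apply]

@[simp] lemma v3_apply1 (a b c : ℕ) : v3 a b c 1 = b := by
  simp [v3, Finsupp.single_apply]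

@[simp] lemma v3_apply2 (a b c : ℕ) : v3 a b c 2 = c := by
  simp [v3, Finsupp.single_apply]

lemma v3_add (a b c a' b' c' : ℕ) :
    v3 a b c + v3 a' b' c' = v3 (a + a') (b + b') (c + c') := by
  ext i; fin_cases i <;> simp

lemma v3_eq (a b c a' b' c' : ℕ) (h0 : a = a') (h1 : b = b') (h2 : c = c') :
    v3 a b c = v3 a' b' c' := by subst h0 h1 h2; rfl

lemma v3_le_iff {a b c : ℕ} {d : Fin 3 →₀ ℕ} :
    v3 a b c ≤ d ↔ a ≤ d 0 ∧ b ≤ d 1 ∧ c ≤ d 2 := by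
  rw [Finsupp.le_def]
  constructor
  · intro h; exact ⟨by simpa using h 0, by simpa using h 1, by simpa using h 2⟩
  · rintro ⟨h0, h1, h2⟩ i; fin_cases i <;> simpa

variable {F : Type*} [Field F]

lemma mono1 (a b : ℕ) :
    (X 0 : MvPolynomial (Fin 3) F) ^ a * X 1 ^ b = monomial (v3 a b 0) 1 := by
  rw [X_pow_eq_monomial, X_pow_eq_monomial, monomial_mul, mul_one]
  congr 1
  simp [v3]

lemma mono2 (a b : ℕ) :
    (X 0 : MvPolynomial (Fin 3) F) ^ a * X 1 ^ b * X 2 = monomial (v3 a b 1) 1 := by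
  rw [mono1, show (X 2 : MvPolynomial (Fin 3) F) = monomial (Finsupp.single 2 1) 1 by
    rw [← X_pow_eq_monomial, pow_one], monomial_mul, mul_one]
  have h : v3 a b 0 + Finsupp.single 2 1 = v3 a b 1 := by
    ext i; fin_cases i <;> simp [Finsupp.single_apply]
  rw [h]


/-- exponent vectors of the generators of `I` -/
def genSet (n : ℕ) : Set (Fin 3 →₀ ℕ) :=
  {s | ∃ i : ℕ, i ≤ 2 * n ∧ i ≠ n ∧ s = v3 i (2 * n - i) 1} ∪
    {v3 n (n + 1) 0, v3 (n + 1) n 0}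

/-- `J F n` is the ideal `I` described by exponent vectors. -/
noncomputable def J (F : Type*) [Field F] (n : ℕ) : Ideal (MvPolynomial (Fin 3) F) :=
  Ideal.span ((fun s => monomial s (1 : F)) '' genSet n)

lemma span_eq (n : ℕ) :
    Ideal.span
      ({p | ∃ i : ℕ, i ≤ 2 * n ∧ i ≠ n ∧
          p = (X 0 : MvPolynomial (Fin 3) F) ^ i * X 1 ^ (2 * n - i) * X 2} ∪
        {X 0 ^ n * X 1 ^ (n + 1), X 0 ^ (n + 1) * X 1 ^ n}) = J F n := by
  unfold J genSet
  congr 1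
  rw [Set.image_union]
  congr 1
  · ext p
    simp only [Set.mem_setOf_eq, Set.mem_image]
    constructor
    · rintro ⟨i, h1, h2, rfl⟩
      exact ⟨v3 i (2 * n - i) 1, ⟨i, h1, h2, rfl⟩, (mono2 i (2 * n - i)).symm⟩
    · rintro ⟨s, ⟨i, h1, h2, rfl⟩, rfl⟩
      exact ⟨i, h1, h2, (mono2 i (2 * n - i)).symm⟩
  · rw [Set.image_insert_eq, Set.image_singleton, ← mono1, ← mono1]

/-- `m`-fold sumsets of a set of exponent vectors -/
def sumSet (G : Set (Fin 3 →₀ ℕ)) : ℕ → Set (Fin 3 →₀ ℕ)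
  | 0 => {0}
  | m + 1 => Set.image2 (· + ·) G (sumSet G m)

lemma span_pow (G : Set (Fin 3 →₀ ℕ)) (m : ℕ) :
    (Ideal.span ((fun s => monomial s (1 : F)) '' G)) ^ m
      = Ideal.span ((fun s => monomial s (1 : F)) '' sumSet G m) := by
  induction m with
  | zero =>
      simp only [pow_zero, sumSet, Set.image_singleton, monomial_zero', C_1]
      rw [Ideal.one_eq_top, Ideal.span_singleton_one]
  | succ m ih =>
      rw [pow_succ', ih, Ideal.span_mul_span']
      congr 1
      rw [show sumSet G (m+1) = Set.image2 (· + ·) G (sumSet G m) from rfl]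
      ext p
      simp only [Set.mem_mul, Set.mem_image, Set.mem_image2]
      constructor
      · rintro ⟨-, ⟨a, ha, rfl⟩, -, ⟨b, hb, rfl⟩, rfl⟩
        exact ⟨a + b, ⟨a, ha, b, hb, rfl⟩, by rw [monomial_mul, one_mul]⟩
      · rintro ⟨-, ⟨a, ha, b, hb, rfl⟩, rfl⟩
        exact ⟨monomial a 1, ⟨a, ha, rfl⟩, monomial b 1, ⟨b, hb, rfl⟩,
          by rw [monomial_mul, one_mul]⟩

lemma sum_coords (n : ℕ) : ∀ m : ℕ, ∀ s ∈ sumSet (genSet n) m,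
    s 2 = 0 → s 0 + s 1 = (2 * n + 1) * m := by
  intro m
  induction m with
  | zero =>
      rintro s hs h2
      rw [Set.mem_singleton_iff.mp hs]
      simp
  | succ m ih =>
      rintro s ⟨g, hg, t, ht, rfl⟩ h2
      have h2' : g 2 + t 2 = 0 := by
        have : (g + t) 2 = 0 := h2
        rwa [Finsupp.add_apply] at this
      have hg2 : g 2 = 0 := by omega
      have ht2 : t 2 = 0 := by omega
      have hgsum : g 0 + g 1 = 2 * n + 1 := by
        rcases hg with ⟨i, h1, h2', rfl⟩ | hg
        · simp at hg2
        · rcases hg with rfl | rfl <;> simp <;> omega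
      have ht01 := ih t ht ht2
      show (g + t) 0 + (g + t) 1 = _
      rw [Finsupp.add_apply, Finsupp.add_apply]
      linarith [hgsum, ht01]


lemma mem_J_of_gen {n : ℕ} {s : Fin 3 →₀ ℕ} (hs : s ∈ genSet n) :
    monomial s (1 : F) ∈ J F n :=
  Ideal.subset_span ⟨s, hs, rfl⟩

lemma genZ {n i : ℕ} (h1 : i ≤ 2 * n) (h2 : i ≠ n) : v3 i (2 * n - i) 1 ∈ genSet n :=
  Or.inl ⟨i, h1, h2, rfl⟩

lemma genA {n : ℕ} : v3 n (n + 1) 0 ∈ genSet n := by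
  right; left; rfl

lemma genB {n : ℕ} : v3 (n + 1) n 0 ∈ genSet n := by
  right; right; rfl

lemma not_mem_pow (n k : ℕ) :
    (monomial (v3 (n * (k + 1)) (n * (k + 1) + k) 0) (1 : F)) ∉ (J F n) ^ (k + 1) := by
  intro h
  rw [J, span_pow] at h
  have hsupp : v3 (n * (k + 1)) (n * (k + 1) + k) 0
      ∈ (monomial (v3 (n * (k + 1)) (n * (k + 1) + k) 0) (1 : F)).support := by
    rw [mem_support_iff, coeff_monomial, if_pos rfl]
    exact one_ne_zero
  obtain ⟨s, hs, hle⟩ := mem_ideal_span_monomial_image.mp h _ hsupp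
  have h0 : s 0 ≤ n * (k + 1) := by simpa using Finsupp.le_def.mp hle 0
  have h1 : s 1 ≤ n * (k + 1) + k := by simpa using Finsupp.le_def.mp hle 1
  have h2 : s 2 = 0 := by simpa using Finsupp.le_def.mp hle 2
  have hsum := sum_coords n (k + 1) s hs h2
  linarith [hsum, h0, h1]

lemma mem_rrPow_one_iff {R : Type*} [CommRing R] (I : Ideal R) (x : R) :
    x ∈ rrPow I 1 ↔ ∃ k, x ∈ (I ^ (1 + k)).colon (I ^ k : Ideal R) := by
  unfold rrPow
  apply Submodule.mem_iSup_of_directed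
  apply Monotone.directed_le
  apply monotone_nat_of_le_succ
  intro k y hy
  rw [Submodule.mem_colon] at hy ⊢
  intro p hp
  rw [pow_succ] at hp
  refine Submodule.mul_induction_on hp (fun m hm q hq => ?_) (fun a b ha hb => ?_)
  · rw [smul_eq_mul, ← mul_assoc,
      show I ^ (1 + (k + 1)) = I ^ (1 + k) * I from pow_succ I (1 + k)]
    exact Ideal.mul_mem_mul (by simpa [smul_eq_mul] using hy m hm) hq
  · rw [smul_add]
    exact add_mem ha hb

lemma le_rrPow_one {R : Type*} [CommRing R] (I : Ideal R) : I ≤ rrPow I 1 := by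
  have h1 : I ≤ (I ^ (1 + 0)).colon (I ^ 0 : Ideal R) := by
    intro y hy
    rw [Submodule.mem_colon]
    intro p _
    rw [smul_eq_mul]
    have : I ^ (1 + 0) = I := pow_one I
    rw [this]
    exact I.mul_mem_right p hy
  exact le_trans h1 (le_iSup (fun k => (I ^ (1 + k)).colon (I ^ k : Ideal R)) 0)

lemma colon_le_rrPow_one {R : Type*} [CommRing R] (I : Ideal R) :
    (I ^ 2).colon I ≤ rrPow I 1 := by
  have h : (I ^ 2).colon I = (I ^ (1 + 1)).colon (I ^ 1 : Ideal R) := by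
    rw [pow_one]
  rw [rrPow, h]
  exact le_iSup (fun k => (I ^ (1 + k)).colon (I ^ k : Ideal R)) 1

lemma XnYn_not_mem_rr (n : ℕ) :
    (X 0 : MvPolynomial (Fin 3) F) ^ n * X 1 ^ n ∉ rrPow (J F n) 1 := by
  rw [mem_rrPow_one_iff]
  rintro ⟨k, hk⟩
  have hmem : (X 0 : MvPolynomial (Fin 3) F) ^ n * X 1 ^ (n + 1) ∈ J F n := by
    rw [mono1]
    exact mem_J_of_gen genA
  have hw : ((X 0 : MvPolynomial (Fin 3) F) ^ n * X 1 ^ (n + 1)) ^ k ∈ (J F n) ^ k :=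
    Ideal.pow_mem_pow hmem k
  have hmul := Submodule.mem_colon.mp hk _ hw
  rw [smul_eq_mul] at hmul
  have heq : (X 0 : MvPolynomial (Fin 3) F) ^ n * X 1 ^ n * ((X 0) ^ n * X 1 ^ (n + 1)) ^ k
      = monomial (v3 (n * (k + 1)) (n * (k + 1) + k) 0) 1 := by
    have e1 : (X 0 : MvPolynomial (Fin 3) F) ^ n * X 1 ^ n * ((X 0) ^ n * X 1 ^ (n + 1)) ^ k
        = (X 0) ^ (n * (k + 1)) * X 1 ^ (n * (k + 1) + k) := by
      ring
    rw [e1, mono1]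
  rw [heq] at hmul
  have h1k : 1 + k = k + 1 := by omega
  rw [h1k] at hmul
  exact not_mem_pow n k hmul

lemma mem_J_of_xyz (n : ℕ) (hn : 2 ≤ n) (r : MvPolynomial (Fin 3) F)
    (hx : X 0 * r ∈ J F n) (hy : X 1 * r ∈ J F n) (hz : X 2 * r ∈ J F n) :
    r ∈ J F n := by
  rw [J, mem_ideal_span_monomial_image] at hx hy hz ⊢
  intro d hd
  have hdx : Finsupp.single 0 1 + d ∈ (X 0 * r).support := by
    rw [mem_support_iff, coeff_X_mul]; exact mem_support_iff.mp hd
  have hdy : Finsupp.single 1 1 + d ∈ (X 1 * r).support := by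
    rw [mem_support_iff, coeff_X_mul]; exact mem_support_iff.mp hd
  have hdz : Finsupp.single 2 1 + d ∈ (X 2 * r).support := by
    rw [mem_support_iff, coeff_X_mul]; exact mem_support_iff.mp hd
  obtain ⟨gx, hgx, hlex⟩ := hx _ hdx
  obtain ⟨gy, hgy, hley⟩ := hy _ hdy
  obtain ⟨gz, hgz, hlez⟩ := hz _ hdz
  simp only [genSet, Set.mem_union, Set.mem_setOf_eq, Set.mem_insert_iff,
    Set.mem_singleton_iff] at hgx hgy hgz
  have e0x : (Finsupp.single (0 : Fin 3) (1:ℕ) + d) 0 = 1 + d 0 := by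
    simp [Finsupp.add_apply, Finsupp.single_apply]
  have e1x : (Finsupp.single (0 : Fin 3) (1:ℕ) + d) 1 = d 1 := by
    simp [Finsupp.add_apply, Finsupp.single_apply]
  have e2x : (Finsupp.single (0 : Fin 3) (1:ℕ) + d) 2 = d 2 := by
    simp [Finsupp.add_apply, Finsupp.single_apply]
  have e0y : (Finsupp.single (1 : Fin 3) (1:ℕ) + d) 0 = d 0 := by
    simp [Finsupp.add_apply, Finsupp.single_apply]
  have e1y : (Finsupp.single (1 : Fin 3) (1:ℕ) + d) 1 = 1 + d 1 := by
    simp [Finsupp.add_apply, Finsupp.single_apply]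
  have e2y : (Finsupp.single (1 : Fin 3) (1:ℕ) + d) 2 = d 2 := by
    simp [Finsupp.add_apply, Finsupp.single_apply]
  have e0z : (Finsupp.single (2 : Fin 3) (1:ℕ) + d) 0 = d 0 := by
    simp [Finsupp.add_apply, Finsupp.single_apply]
  have e1z : (Finsupp.single (2 : Fin 3) (1:ℕ) + d) 1 = d 1 := by
    simp [Finsupp.add_apply, Finsupp.single_apply]
  have e2z : (Finsupp.single (2 : Fin 3) (1:ℕ) + d) 2 = 1 + d 2 := by
    simp [Finsupp.add_apply, Finsupp.single_apply]
  rcases hgz with ⟨i, hi1, hi2, rfl⟩ | (rfl | rfl)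
  · -- gz is a Z-type generator
    obtain ⟨hz0, hz1, -⟩ := v3_le_iff.mp hlez
    rw [e0z] at hz0
    rw [e1z] at hz1
    by_cases hzc : 1 ≤ d 2
    · exact ⟨v3 i (2 * n - i) 1, genZ hi1 hi2, v3_le_iff.mpr ⟨hz0, hz1, hzc⟩⟩
    · -- d 2 = 0 : the X and Y conditions can only use the pure generators
      have hdz0 : d 2 = 0 := by omega
      have hXfact : (n ≤ 1 + d 0 ∧ n + 1 ≤ d 1) ∨ (n + 1 ≤ 1 + d 0 ∧ n ≤ d 1) := by
        rcases hgx with ⟨j, hj1, hj2, rfl⟩ | (rfl | rfl)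
        · obtain ⟨-, -, h2⟩ := v3_le_iff.mp hlex
          rw [e2x, hdz0] at h2
          omega
        · obtain ⟨h0, h1, -⟩ := v3_le_iff.mp hlex
          rw [e0x] at h0; rw [e1x] at h1
          exact Or.inl ⟨h0, h1⟩
        · obtain ⟨h0, h1, -⟩ := v3_le_iff.mp hlex
          rw [e0x] at h0; rw [e1x] at h1
          exact Or.inr ⟨h0, h1⟩
      have hYfact : (n ≤ d 0 ∧ n + 1 ≤ 1 + d 1) ∨ (n + 1 ≤ d 0 ∧ n ≤ 1 + d 1) := by
        rcases hgy with ⟨j, hj1, hj2, rfl⟩ | (rfl | rfl)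
        · obtain ⟨-, -, h2⟩ := v3_le_iff.mp hley
          rw [e2y, hdz0] at h2
          omega
        · obtain ⟨h0, h1, -⟩ := v3_le_iff.mp hley
          rw [e0y] at h0; rw [e1y] at h1
          exact Or.inl ⟨h0, h1⟩
        · obtain ⟨h0, h1, -⟩ := v3_le_iff.mp hley
          rw [e0y] at h0; rw [e1y] at h1
          exact Or.inr ⟨h0, h1⟩
      by_cases hYbig : n + 1 ≤ d 1
      · exact ⟨v3 n (n + 1) 0, genA, v3_le_iff.mpr ⟨by omega, by omega, by omega⟩⟩
      · exact ⟨v3 (n + 1) n 0, genB, v3_le_iff.mpr ⟨by omega, by omega, by omega⟩⟩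
  · -- gz = a
    obtain ⟨h0, h1, -⟩ := v3_le_iff.mp hlez
    rw [e0z] at h0; rw [e1z] at h1
    exact ⟨v3 n (n + 1) 0, genA, v3_le_iff.mpr ⟨h0, h1, by omega⟩⟩
  · -- gz = b
    obtain ⟨h0, h1, -⟩ := v3_le_iff.mp hlez
    rw [e0z] at h0; rw [e1z] at h1
    exact ⟨v3 (n + 1) n 0, genB, v3_le_iff.mpr ⟨h0, h1, by omega⟩⟩


lemma mul_mem_sq {n : ℕ} {w : MvPolynomial (Fin 3) F}
    (h : ∀ s ∈ genSet n, w * monomial s 1 ∈ (J F n) ^ 2) :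
    ∀ p ∈ J F n, w * p ∈ (J F n) ^ 2 := by
  intro p hp
  refine Submodule.span_induction ?_ ?_ ?_ ?_ hp
  · rintro x ⟨s, hs, rfl⟩
    exact h s hs
  · rw [mul_zero]; exact zero_mem _
  · intro a b _ _ ha hb
    rw [mul_add]; exact add_mem ha hb
  · intro a x _ hx
    rw [smul_eq_mul, ← mul_assoc, mul_comm w a, mul_assoc]
    exact Ideal.mul_mem_left _ a hx

lemma wit_colon (n : ℕ) (hn : 2 ≤ n) :
    (X 0 : MvPolynomial (Fin 3) F) ^ n * X 1 ^ n * X 2 ∈ ((J F n) ^ 2).colon (J F n) := by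
  rw [Submodule.mem_colon]
  intro p hp
  rw [smul_eq_mul]
  refine mul_mem_sq ?_ p hp
  intro s hs
  rcases hs with ⟨i, hi1, hi2, rfl⟩ | (rfl | rfl)
  · -- Z-type generator
    obtain ⟨j, k, hj1, hj2, hk1, hk2, hjk⟩ :
        ∃ j k : ℕ, j ≤ 2 * n ∧ j ≠ n ∧ k ≤ 2 * n ∧ k ≠ n ∧ j + k = n + i := by
      by_cases h0 : i = 0
      · exact ⟨1, n - 1, by omega, by omega, by omega, by omega, by omega⟩
      by_cases h1 : i < n
      · exact ⟨0, n + i, by omega, by omega, by omega, by omega, by omega⟩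
      by_cases h2 : i = 2 * n
      · exact ⟨2 * n - 1, n + 1, by omega, by omega, by omega, by omega, by omega⟩
      · exact ⟨2 * n, i - n, by omega, by omega, by omega, by omega, by omega⟩
    have key : (X 0 : MvPolynomial (Fin 3) F) ^ n * X 1 ^ n * X 2 * monomial (v3 i (2 * n - i) 1) 1
        = monomial (v3 j (2 * n - j) 1) 1 * monomial (v3 k (2 * n - k) 1) 1 := by
      rw [mono2, monomial_mul, monomial_mul, v3_add, v3_add]
      rw [v3_eq (n + i) (n + (2 * n - i)) (1 + 1) (j + k) (2 * n - j + (2 * n - k)) 2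
        (by omega) (by omega) (by omega)]
    rw [key, pow_two]
    exact Ideal.mul_mem_mul (mem_J_of_gen (genZ hj1 hj2)) (mem_J_of_gen (genZ hk1 hk2))
  · -- generator X^n Y^(n+1)
    have key : (X 0 : MvPolynomial (Fin 3) F) ^ n * X 1 ^ n * X 2 * monomial (v3 n (n + 1) 0) 1
        = monomial (v3 (n - 1) (2 * n - (n - 1)) 1) 1 * monomial (v3 (n + 1) n 0) 1 := by
      rw [mono2, monomial_mul, monomial_mul, v3_add, v3_add]
      rw [v3_eq (n + n) (n + (n + 1)) (1 + 0) (n - 1 + (n + 1)) (2 * n - (n - 1) + n) (1 + 0)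
        (by omega) (by omega) (by omega)]
    rw [key, pow_two]
    exact Ideal.mul_mem_mul (mem_J_of_gen (genZ (by omega) (by omega))) (mem_J_of_gen genB)
  · -- generator X^(n+1) Y^n
    have key : (X 0 : MvPolynomial (Fin 3) F) ^ n * X 1 ^ n * X 2 * monomial (v3 (n + 1) n 0) 1
        = monomial (v3 (n + 1) (2 * n - (n + 1)) 1) 1 * monomial (v3 n (n + 1) 0) 1 := by
      rw [mono2, monomial_mul, monomial_mul, v3_add, v3_add]
      rw [v3_eq (n + (n + 1)) (n + n) (1 + 0) (n + 1 + n) (2 * n - (n + 1) + (n + 1)) (1 + 0)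
        (by omega) (by omega) (by omega)]
    rw [key, pow_two]
    exact Ideal.mul_mem_mul (mem_J_of_gen (genZ (by omega) (by omega))) (mem_J_of_gen genA)

lemma mem_mIdeal_iff (p : MvPolynomial (Fin 3) F) :
    p ∈ Ideal.span {(X 0 : MvPolynomial (Fin 3) F), X 1, X 2} ↔
      ∀ d ∈ p.support, d ≠ 0 := by
  have himg : ({(X 0 : MvPolynomial (Fin 3) F), X 1, X 2} : Set _)
      = MvPolynomial.X '' Set.univ := by
    rw [Set.image_univ]
    ext q
    simp only [Set.mem_insert_iff, Set.mem_singleton_iff, Set.mem_range]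
    constructor
    · rintro (rfl | rfl | rfl)
      exacts [⟨0, rfl⟩, ⟨1, rfl⟩, ⟨2, rfl⟩]
    · rintro ⟨i, rfl⟩
      fin_cases i <;> simp
  rw [himg, mem_ideal_span_X_image]
  refine forall₂_congr fun d _ => ?_
  rw [Finsupp.ne_iff]
  simp

lemma mIdeal_prime :
    (Ideal.span {(X 0 : MvPolynomial (Fin 3) F), X 1, X 2}).IsPrime := by
  have hker : Ideal.span {(X 0 : MvPolynomial (Fin 3) F), X 1, X 2}
      = RingHom.ker (constantCoeff (σ := Fin 3) (R := F)) := by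
    ext p
    rw [mem_mIdeal_iff, RingHom.mem_ker, constantCoeff_eq]
    constructor
    · intro h
      by_contra hc
      exact h 0 (mem_support_iff.mpr hc) rfl
    · intro h d hd hd0
      subst hd0
      exact mem_support_iff.mp hd h
  rw [hker]
  exact RingHom.ker_isPrime _

lemma quot_smul {R : Type*} [CommRing R] (I : Ideal R) (a w : R) :
    a • (Ideal.Quotient.mk I w) = Ideal.Quotient.mk I (a * w) := by
  rw [← Ideal.Quotient.mk_eq_mk, ← Ideal.Quotient.mk_eq_mk, ← Submodule.Quotient.mk_smul,
    smul_eq_mul]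

lemma ann_eq {R : Type*} [CommRing R] (I : Ideal R) (w : R) :
    (Submodule.span R {Ideal.Quotient.mk I w}).annihilator = I.colon (Ideal.span {w}) := by
  ext a
  rw [Submodule.mem_annihilator_span_singleton, quot_smul, Ideal.Quotient.eq_zero_iff_mem,
    Ideal.mem_colon_span_singleton]

end Stmt17Aux

open Stmt17Aux MvPolynomial in
/-- Let `R = F[X,Y,Z]`, `n ≥ 2`, and `I` the ideal generated by the monomials
`X^iY^{2n-i}Z` for `0 ≤ i ≤ 2n`, `i ≠ n`, together with `X^nY^{n+1}` and `X^{n+1}Y^n`.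
Then `~I : (X^nY^n) = (X,Y,Z)`: explicitly `X^nY^n ∉ ~I`, `(X,Y)·X^nY^n ⊆ I` and
`X^nY^nZ ∈ I^2 : I ⊆ ~I`.  Consequently `(X,Y,Z)` is an associated prime of `R/~I`,
although it is not an associated prime of `R/I`. -/
theorem stmt_17 (F : Type*) [Field F] (n : ℕ) (hn : 2 ≤ n)
    (X Y Z : MvPolynomial (Fin 3) F)
    (hX : X = MvPolynomial.X 0) (hY : Y = MvPolynomial.X 1) (hZ : Z = MvPolynomial.X 2)
    (I : Ideal (MvPolynomial (Fin 3) F))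
    (hI : I = Ideal.span
      ({p | ∃ i : ℕ, i ≤ 2 * n ∧ i ≠ n ∧ p = X ^ i * Y ^ (2 * n - i) * Z} ∪
       {X ^ n * Y ^ (n + 1), X ^ (n + 1) * Y ^ n})) :
    (rrPow I 1).colon (Ideal.span {X ^ n * Y ^ n}) = Ideal.span {X, Y, Z} ∧
    X ^ n * Y ^ n ∉ rrPow I 1 ∧
    (∀ f ∈ Ideal.span {X, Y}, f * (X ^ n * Y ^ n) ∈ I) ∧
    X ^ n * Y ^ n * Z ∈ (I ^ 2).colon I ∧
    (I ^ 2).colon I ≤ rrPow I 1 ∧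
    IsAssociatedPrime (Ideal.span {X, Y, Z}) (MvPolynomial (Fin 3) F ⧸ rrPow I 1) ∧
    ¬ IsAssociatedPrime (Ideal.span {X, Y, Z}) (MvPolynomial (Fin 3) F ⧸ I) := by
  subst hX hY hZ
  have hJ : I = J F n := by rw [hI, span_eq]
  subst hJ
  have hne := XnYn_not_mem_rr (F := F) n
  have hwit := wit_colon (F := F) n hn
  have hcle := colon_le_rrPow_one (J F n)
  have hXeq : (X 0 : MvPolynomial (Fin 3) F) * (X 0 ^ n * X 1 ^ n)
      = monomial (v3 (n + 1) n 0) 1 := by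
    rw [← mono1]; ring
  have hYeq : (X 1 : MvPolynomial (Fin 3) F) * (X 0 ^ n * X 1 ^ n)
      = monomial (v3 n (n + 1) 0) 1 := by
    rw [← mono1]; ring
  have hXmem : (X 0 : MvPolynomial (Fin 3) F) * (X 0 ^ n * X 1 ^ n) ∈ rrPow (J F n) 1 :=
    le_rrPow_one _ (by rw [hXeq]; exact mem_J_of_gen genB)
  have hYmem : (X 1 : MvPolynomial (Fin 3) F) * (X 0 ^ n * X 1 ^ n) ∈ rrPow (J F n) 1 :=
    le_rrPow_one _ (by rw [hYeq]; exact mem_J_of_gen genA)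
  have hZmem : (X 2 : MvPolynomial (Fin 3) F) * (X 0 ^ n * X 1 ^ n) ∈ rrPow (J F n) 1 := by
    have : (X 2 : MvPolynomial (Fin 3) F) * (X 0 ^ n * X 1 ^ n)
        = X 0 ^ n * X 1 ^ n * X 2 := by ring
    rw [this]
    exact hcle hwit
  have hmain : (rrPow (J F n) 1).colon (Ideal.span {X 0 ^ n * X 1 ^ n} : Ideal (MvPolynomial (Fin 3) F))
      = Ideal.span {(X 0 : MvPolynomial (Fin 3) F), X 1, X 2} := by
    apply le_antisymm
    · intro f hf
      rw [Ideal.mem_colon_span_singleton] at hf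
      rw [mem_mIdeal_iff]
      by_contra hc
      push_neg at hc
      obtain ⟨d, hd, hd0⟩ := hc
      subst hd0
      have hc0 : coeff 0 f ≠ 0 := mem_support_iff.mp hd
      have hsub : f - C (coeff 0 f) ∈ Ideal.span {(X 0 : MvPolynomial (Fin 3) F), X 1, X 2} := by
        rw [mem_mIdeal_iff]
        intro d' hd' h0
        subst h0
        rw [mem_support_iff] at hd'
        apply hd'
        simp [coeff_sub, coeff_C]
      have hmw : ∀ g ∈ Ideal.span {(X 0 : MvPolynomial (Fin 3) F), X 1, X 2},
          g * (X 0 ^ n * X 1 ^ n) ∈ rrPow (J F n) 1 := by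
        intro g hg
        refine Submodule.span_induction ?_ ?_ ?_ ?_ hg
        · rintro x hx
          simp only [Set.mem_insert_iff, Set.mem_singleton_iff] at hx
          rcases hx with rfl | rfl | rfl
          · exact hXmem
          · exact hYmem
          · exact hZmem
        · rw [zero_mul]; exact zero_mem _
        · intro a b _ _ ha hb; rw [add_mul]; exact add_mem ha hb
        · intro a x _ hx
          rw [smul_eq_mul, mul_assoc]
          exact Ideal.mul_mem_left _ a hx
      have h1 : (f - C (coeff 0 f)) * (X 0 ^ n * X 1 ^ n) ∈ rrPow (J F n) 1 := hmw _ hsub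
      have h2 : C (coeff 0 f) * (X 0 ^ n * X 1 ^ n) ∈ rrPow (J F n) 1 := by
        have heq : C (coeff 0 f) * (X 0 ^ n * X 1 ^ n)
            = f * (X 0 ^ n * X 1 ^ n) - (f - C (coeff 0 f)) * (X 0 ^ n * X 1 ^ n) := by ring
        rw [heq]; exact sub_mem hf h1
      apply hne
      have heq2 : (X 0 : MvPolynomial (Fin 3) F) ^ n * X 1 ^ n
          = C (coeff 0 f)⁻¹ * (C (coeff 0 f) * (X 0 ^ n * X 1 ^ n)) := by
        rw [← mul_assoc, ← C_mul, inv_mul_cancel₀ hc0, C_1, one_mul]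
      rw [heq2]
      exact Ideal.mul_mem_left _ _ h2
    · rw [Ideal.span_le]
      rintro x hx
      simp only [Set.mem_insert_iff, Set.mem_singleton_iff] at hx
      rcases hx with rfl | rfl | rfl <;> rw [SetLike.mem_coe, Ideal.mem_colon_span_singleton]
      · exact hXmem
      · exact hYmem
      · exact hZmem
  refine ⟨hmain, hne, ?_, ?_, hcle, ?_, ?_⟩
  · -- (X,Y) * X^nY^n ⊆ I
    intro f hf
    refine Submodule.span_induction ?_ ?_ ?_ ?_ hf
    · rintro x hx
      simp only [Set.mem_insert_iff, Set.mem_singleton_iff] at hx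
      rcases hx with rfl | rfl
      · rw [hXeq]; exact mem_J_of_gen genB
      · rw [hYeq]; exact mem_J_of_gen genA
    · rw [zero_mul]; exact zero_mem _
    · intro a b _ _ ha hb; rw [add_mul]; exact add_mem ha hb
    · intro a x _ hx
      rw [smul_eq_mul, mul_assoc]
      exact Ideal.mul_mem_left _ a hx
  · exact hwit
  · exact isAssociatedPrime_iff.mpr
      ⟨mIdeal_prime, Ideal.Quotient.mk _ (X 0 ^ n * X 1 ^ n), by rw [Submodule.bot_colon', ann_eq, hmain]⟩
  · rw [isAssociatedPrime_iff]; rintro ⟨hp, x, hx⟩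
    obtain ⟨r, rfl⟩ := Ideal.Quotient.mk_surjective x
    rw [Submodule.bot_colon', ann_eq] at hx
    have hmem : ∀ i : Fin 3, (X i : MvPolynomial (Fin 3) F) * r ∈ J F n := by
      intro i
      have h1 : (X i : MvPolynomial (Fin 3) F) ∈ Ideal.span {(X 0 : MvPolynomial (Fin 3) F), X 1, X 2} := by
        apply Ideal.subset_span
        fin_cases i <;> simp
      rw [hx, Ideal.mem_colon_span_singleton] at h1
      exact h1
    have hr : r ∈ J F n := mem_J_of_xyz n hn r (hmem 0) (hmem 1) (hmem 2)
    have hone : (1 : MvPolynomial (Fin 3) F) ∈ Ideal.span {(X 0 : MvPolynomial (Fin 3) F), X 1, X 2} := by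
      rw [hx, Ideal.mem_colon_span_singleton, one_mul]
      exact hr
    exact hp.ne_top ((Ideal.eq_top_iff_one _).mpr hone)
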